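/- Assume that Σ_{d≥0} P_{Lw}(d) > 1/2 for every word w over {L,R}, where Lw denotes the word consisting of the letter L followed by w. Then Σ_{d≥0} μ_v(d) > 1/2 for every word v over {L,R}. -/

import Mathlib

/-- The probability mass functions `P t` on ℤ, defined by
`P 1 = δ₀`, `P (2t) = P t`, `P (2t+1) d = ½ P (t+1) (d+1) + ½ P t (d-1)`. -/
noncomputable def P : ℕ → ℤ → ℝ
  | 0, _ => 0
  | 1, d => if d = 0 then 1 else 0
  | (n+2), d =>
      if h : (n + 2) % 2 = 0 then P ((n+2)/2) d
      else (1/2) * P ((n+2)/2 + 1) (d+1) + (1/2) * P ((n+2)/2) (d-1)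
  decreasing_by all_goals omega

/-- Letters of the alphabet. -/
inductive LR | L | R
deriving DecidableEq

/-- One step of the identification of words with odd integers: `L : t ↦ 2t-1`, `R : t ↦ 2t+1`. -/
def LRstep (t : ℕ) : LR → ℕ
  | LR.L => 2 * t - 1
  | LR.R => 2 * t + 1

/-- The odd integer associated to a word over `{L,R}`, starting from 3. -/
def hword (w : List LR) : ℕ := w.foldl LRstep 3

/-- The geometric measure `μ₁`: `μ₁ k = (1/2)^(2-k)` for `k ≤ 1`, and `0` otherwise. -/
noncomputable def mu1 (k : ℤ) : ℝ := if k ≤ 1 then (1/2 : ℝ) ^ (2 - k) else 0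

/-- `μ t = μ₁ * P t`. -/
noncomputable def mu (t : ℕ) (d : ℤ) : ℝ := ∑' k : ℤ, mu1 k * P t (d - k)

/-! ### Auxiliary lemmas -/

lemma P_zero (d : ℤ) : P 0 d = 0 := by simp [P]

lemma P_one (d : ℤ) : P 1 d = if d = 0 then 1 else 0 := by simp [P]

lemma P_even {n : ℕ} (hn : 1 ≤ n) (d : ℤ) : P (2*n) d = P n d := by
  obtain ⟨m, rfl⟩ : ∃ m, n = m + 1 := ⟨n-1, by omega⟩
  rw [show 2*(m+1) = (2*m) + 2 by ring, P, dif_pos (by omega : (2*m+2) % 2 = 0)]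
  congr 1
  omega

lemma P_odd {n : ℕ} (hn : 1 ≤ n) (d : ℤ) :
    P (2*n+1) d = (1/2) * P (n+1) (d+1) + (1/2) * P n (d-1) := by
  obtain ⟨m, rfl⟩ : ∃ m, n = m + 1 := ⟨n-1, by omega⟩
  rw [show 2*(m+1)+1 = (2*m+1) + 2 by ring, P, dif_neg (by omega : ¬ (2*m+1+2) % 2 = 0)]
  rw [show (2*m+1+2)/2 = m+1 by omega]

lemma P_bounds (n : ℕ) : ∀ d : ℤ, 0 ≤ P n d ∧ P n d ≤ 1 := by
  induction n using Nat.strong_induction_on with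
  | _ n ih =>
    match n with
    | 0 => intro d; simp [P_zero]
    | 1 => intro d; rw [P_one]; split <;> norm_num
    | (m+2) =>
      intro d
      rcases Nat.even_or_odd (m+2) with he | ho
      · obtain ⟨c, hc⟩ := he
        have hc' : m + 2 = 2 * c := by omega
        rw [hc', P_even (by omega)]
        exact ih c (by omega) d
      · obtain ⟨c, hc⟩ := ho
        rw [hc, P_odd (by omega)]
        have h1 := ih (c+1) (by omega) (d+1)
        have h2 := ih c (by omega) (d-1)
        constructor
        · have := h1.1; have := h2.1; nlinarith
        · nlinarith [h1.1, h1.2, h2.1, h2.2]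

lemma P_nonneg (n : ℕ) (d : ℤ) : 0 ≤ P n d := (P_bounds n d).1
lemma P_le_one (n : ℕ) (d : ℤ) : P n d ≤ 1 := (P_bounds n d).2

lemma mu1_nonneg (k : ℤ) : 0 ≤ mu1 k := by
  unfold mu1; split <;> positivity

lemma summable_mu1 : Summable mu1 := by
  apply Summable.of_nat_of_neg
  · apply summable_of_ne_finset_zero (s := {0, 1})
    intro n hn
    simp only [Finset.mem_insert, Finset.mem_singleton] at hn
    have : ¬ ((n : ℤ) ≤ 1) := by omega
    simp [mu1, this]
  · have h : ∀ n : ℕ, mu1 (-(n:ℤ)) = (1/2 : ℝ) ^ (n + 2) := by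
      intro n
      have h1 : (-(n:ℤ)) ≤ 1 := by omega
      rw [mu1, if_pos h1, show (2 : ℤ) - (-(n:ℤ)) = ((n + 2 : ℕ) : ℤ) by omega, zpow_natCast]
    rw [funext h]
    apply Summable.of_nonneg_of_le (fun n => by positivity) (fun n => ?_) summable_geometric_two
    calc (1/2 : ℝ) ^ (n+2) ≤ (1/2 : ℝ)^n := by
          apply pow_le_pow_of_le_one (by norm_num) (by norm_num); omega
      _ = (1/2)^n := rfl

lemma summable_muP (t : ℕ) (d : ℤ) : Summable (fun k : ℤ => mu1 k * P t (d - k)) := by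
  apply Summable.of_nonneg_of_le (fun k => mul_nonneg (mu1_nonneg k) (P_nonneg t _))
    (fun k => ?_) summable_mu1
  calc mu1 k * P t (d - k) ≤ mu1 k * 1 := by
        apply mul_le_mul_of_nonneg_left (P_le_one t _) (mu1_nonneg k)
    _ = mu1 k := mul_one _

lemma mu_one (d : ℤ) : mu 1 d = mu1 d := by
  unfold mu
  rw [tsum_eq_single d]
  · simp [P_one]
  · intro k hk
    rw [P_one, if_neg (by omega : ¬ d - k = 0), mul_zero]

lemma mu_even {n : ℕ} (hn : 1 ≤ n) (d : ℤ) : mu (2*n) d = mu n d := by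
  unfold mu
  exact tsum_congr fun k => by rw [P_even hn]

lemma mu_odd {n : ℕ} (hn : 1 ≤ n) (d : ℤ) :
    mu (2*n+1) d = (1/2) * mu (n+1) (d+1) + (1/2) * mu n (d-1) := by
  unfold mu
  have e : ∀ k : ℤ, mu1 k * P (2*n+1) (d - k)
      = (1/2) * (mu1 k * P (n+1) ((d+1) - k)) + (1/2) * (mu1 k * P n ((d-1) - k)) := by
    intro k
    rw [P_odd hn, show d - k + 1 = (d+1) - k from by ring,
      show d - k - 1 = (d-1) - k from by ring]
    ring
  rw [funext e, Summable.tsum_add ((summable_muP (n+1) (d+1)).mul_left _) ((summable_muP n (d-1)).mul_left _),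
    tsum_mul_left, tsum_mul_left]

lemma mu1_rec (d : ℤ) : mu1 d = 1/2 * mu1 (d+1) + 1/2 * (if d = 1 then 1 else 0) := by
  unfold mu1
  rcases lt_trichotomy d 1 with h | h | h
  · rw [if_pos (by omega : d ≤ 1), if_pos (by omega : d + 1 ≤ 1), if_neg (by omega : ¬ d = 1)]
    rw [show (2 : ℤ) - d = (2 - (d+1)) + 1 by ring, zpow_add₀ (by norm_num : (1/2:ℝ) ≠ 0)]
    ring
  · subst h; norm_num
  · rw [if_neg (by omega : ¬ d ≤ 1), if_neg (by omega : ¬ d + 1 ≤ 1), if_neg (by omega : ¬ d = 1)]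
    ring

lemma mu1_ge2 {d : ℤ} (hd : 2 ≤ d) : mu1 d = 0 := by
  unfold mu1; rw [if_neg (by omega)]

lemma P_pow2 (k : ℕ) (d : ℤ) : P (2^k) d = P 1 d := by
  induction k with
  | zero => rfl
  | succ k ih =>
    rw [pow_succ, mul_comm, P_even Nat.one_le_two_pow, ih]

lemma C_lemma (k : ℕ) : ∀ d : ℤ, (2:ℤ) - k ≤ d → P (2^(k+1)+1) d = mu1 d := by
  induction k with
  | zero =>
    intro d hd
    norm_num at hd ⊢
    rw [show (3:ℕ) = 2*1+1 by norm_num, P_odd le_rfl,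
      show (1:ℕ)+1 = 2*1 by norm_num, P_even le_rfl, P_one, P_one,
      if_neg (by omega : ¬ d + 1 = 0), if_neg (by omega : ¬ d - 1 = 0), mu1_ge2 hd]
    ring
  | succ k ih =>
    intro d hd
    rw [show 2^(k+1+1)+1 = 2*(2^(k+1))+1 by ring, P_odd Nat.one_le_two_pow]
    rw [ih (d+1) (by push_cast at hd ⊢; omega), P_pow2, P_one, mu1_rec d]
    by_cases h : d = 1
    · simp [h]
    · rw [if_neg h, if_neg (by omega : ¬ d - 1 = 0)]

lemma foldl_ge (v : List LR) : ∀ t : ℕ, 3 ≤ t → 3 ≤ v.foldl LRstep t := by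
  induction v with
  | nil => intro t ht; simpa using ht
  | cons c v ih =>
    intro t ht
    rw [List.foldl_cons]
    apply ih
    cases c <;> simp [LRstep] <;> omega

lemma rep_foldl (n : ℕ) : ∀ t : ℕ, 1 ≤ t →
    (List.replicate n LR.L).foldl LRstep t = 2^n*(t-1)+1 := by
  induction n with
  | zero => intro t ht; simp; omega
  | succ n ih =>
    intro t ht
    rw [List.replicate_succ, List.foldl_cons]
    have : LRstep t LR.L = 2*t-1 := rfl
    rw [this, ih (2*t-1) (by omega)]
    obtain ⟨u, rfl⟩ : ∃ u, t = u + 1 := ⟨t-1, by omega⟩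
    have e1 : 2*(u+1)-1-1 = 2*u := by omega
    have e2 : u+1-1 = u := by omega
    rw [e1, e2, pow_succ]
    ring

lemma IND (m s : ℕ) (hm : 3 ≤ m) (hs : 3 ≤ s) (B : ℤ)
    (hbase : ∀ d : ℤ, B ≤ d →
      P m d = mu s d ∧ P (m-1) d = mu (s-1) d ∧ P (m+1) d = mu (s+1) d) :
    ∀ (v : List LR) (d : ℤ), B + v.length ≤ d →
      P (v.foldl LRstep m) d = mu (v.foldl LRstep s) d ∧
      P (v.foldl LRstep m - 1) d = mu (v.foldl LRstep s - 1) d ∧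
      P (v.foldl LRstep m + 1) d = mu (v.foldl LRstep s + 1) d := by
  intro v
  induction v using List.reverseRecOn with
  | nil => intro d hd; exact hbase d (by simpa using hd)
  | append_singleton v c ih =>
    intro d hd
    simp only [List.foldl_append, List.foldl_cons, List.foldl_nil]
    set M := v.foldl LRstep m with hM'
    set S := v.foldl LRstep s with hS'
    have hM : 3 ≤ M := foldl_ge v m hm
    have hS : 3 ≤ S := foldl_ge v s hs
    have hlen : B + v.length + 1 ≤ d := by
      rw [List.length_append, List.length_singleton] at hd
      push_cast at hd ⊢; omega
    have ih0 := ih d (by omega)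
    have ihp := ih (d+1) (by omega)
    have ihm := ih (d-1) (by omega)
    cases c with
    | L =>
      have hstep : LRstep M LR.L = 2*M - 1 := rfl
      have hstepS : LRstep S LR.L = 2*S - 1 := rfl
      rw [hstep, hstepS]
      refine ⟨?_, ?_, ?_⟩
      · rw [show 2*M - 1 = 2*(M-1)+1 by omega, P_odd (by omega),
          show M-1+1 = M by omega, ihp.1, ihm.2.1,
          show 2*S - 1 = 2*(S-1)+1 by omega, mu_odd (by omega),
          show S-1+1 = S by omega]
      · rw [show 2*M - 1 - 1 = 2*(M-1) by omega, P_even (by omega), ih0.2.1,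
          show 2*S - 1 - 1 = 2*(S-1) by omega, mu_even (by omega)]
      · rw [show 2*M - 1 + 1 = 2*M by omega, P_even (by omega), ih0.1,
          show 2*S - 1 + 1 = 2*S by omega, mu_even (by omega)]
    | R =>
      have hstep : LRstep M LR.R = 2*M + 1 := rfl
      have hstepS : LRstep S LR.R = 2*S + 1 := rfl
      rw [hstep, hstepS]
      refine ⟨?_, ?_, ?_⟩
      · rw [P_odd (by omega), ihp.2.2, ihm.1, mu_odd (by omega)]
      · rw [show 2*M + 1 - 1 = 2*M by omega, P_even (by omega), ih0.1,
          show 2*S + 1 - 1 = 2*S by omega, mu_even (by omega)]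
      · rw [show 2*M + 1 + 1 = 2*(M+1) by omega, P_even (by omega), ih0.2.2,
          show 2*S + 1 + 1 = 2*(S+1) by omega, mu_even (by omega)]

lemma one_le' {n : ℕ} (h : 0 < n) : 1 ≤ n := h

/-- If `∑_{d ≥ 0} P_{Lw}(d) > 1/2` for every word `w`, then
`∑_{d ≥ 0} μ_v(d) > 1/2` for every word `v`. -/
theorem cusick_of_L_words
    (H : ∀ w : List LR, (1 : ℝ) / 2 < ∑' d : ℕ, P (hword (LR.L :: w)) (d : ℤ)) :
    ∀ v : List LR, (1 : ℝ) / 2 < ∑' d : ℕ, mu (hword v) (d : ℤ) := by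
  intro v
  set j := v.length with hj
  set w : List LR := List.replicate (j+2) LR.L ++ LR.R :: v with hw
  have hmu21 : ∀ d : ℤ, mu 2 d = mu1 d := by
    intro d
    rw [show (2:ℕ) = 2*1 by norm_num, mu_even le_rfl, mu_one]
  have hmu41 : ∀ d : ℤ, mu 4 d = mu1 d := by
    intro d
    rw [show (4:ℕ) = 2*2 by norm_num, mu_even (by norm_num), hmu21]
  have hh : hword (LR.L :: w) = v.foldl LRstep (2^(j+5)+3) := by
    have hLw : LR.L :: w = List.replicate (j+3) LR.L ++ LR.R :: v := by
      rw [show j+3 = (j+2)+1 by ring, List.replicate_succ]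
      rfl
    rw [hLw]
    unfold hword
    rw [List.foldl_append, rep_foldl (j+3) 3 (by norm_num), List.foldl_cons]
    have e : LRstep (2^(j+3)*(3-1)+1) LR.R = 2^(j+5)+3 := by
      show 2*(2^(j+3)*(3-1)+1)+1 = 2^(j+5)+3
      have : 2^(j+5) = 2^(j+3)*4 := by ring
      omega
    rw [e]
  have hbase : ∀ d : ℤ, -(j:ℤ) ≤ d →
      P (2^(j+5)+3) d = mu 3 d ∧ P (2^(j+5)+3-1) d = mu (3-1) d ∧
      P (2^(j+5)+3+1) d = mu (3+1) d := by
    intro d hd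
    refine ⟨?_, ?_, ?_⟩
    · rw [show 2^(j+5)+3 = 2*(2^(j+4)+1)+1 by ring, P_odd (one_le' (by positivity)),
        show 2^(j+4)+1+1 = 2*(2^(j+3)+1) by ring, P_even (one_le' (by positivity)),
        show 2^(j+3)+1 = 2^((j+2)+1)+1 by ring,
        C_lemma (j+2) (d+1) (by push_cast; omega),
        show 2^(j+4)+1 = 2^((j+3)+1)+1 by ring,
        C_lemma (j+3) (d-1) (by push_cast; omega),
        show (3:ℕ) = 2*1+1 by norm_num, mu_odd le_rfl, hmu21, mu_one]
    · rw [show 2^(j+5)+3-1 = 2*(2^(j+4)+1) by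
          have : 2^(j+5) = 2*2^(j+4) := (by ring); omega,
        P_even (one_le' (by positivity)),
        show 2^(j+4)+1 = 2^((j+3)+1)+1 by ring,
        C_lemma (j+3) d (by push_cast; omega),
        show (3:ℕ)-1 = 2 by norm_num, hmu21]
    · rw [show 2^(j+5)+3+1 = 2*(2^(j+4)+2) by ring, P_even (one_le' (by positivity)),
        show 2^(j+4)+2 = 2*(2^(j+3)+1) by ring, P_even (one_le' (by positivity)),
        show 2^(j+3)+1 = 2^((j+2)+1)+1 by ring,
        C_lemma (j+2) d (by push_cast; omega),
        show (3:ℕ)+1 = 4 by norm_num, hmu41]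
  have key : ∀ d : ℕ, P (hword (LR.L :: w)) (d:ℤ) = mu (hword v) (d:ℤ) := by
    intro d
    rw [hh]
    have := (IND (2^(j+5)+3) 3 (Nat.le_add_left 3 _) le_rfl (-(j:ℤ)) hbase v (d:ℤ)
      (by rw [hj]; omega)).1
    exact this
  calc (1:ℝ)/2 < ∑' d : ℕ, P (hword (LR.L :: w)) (d:ℤ) := H w
    _ = ∑' d : ℕ, mu (hword v) (d:ℤ) := tsum_congr key
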